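/- If G has maximum SLEE among all connected graphs on n vertices with r cut vertices, then every block of G is a complete graph. -/
import Mathlib


open scoped Classical

variable {V : Type*}

/-- The signless Laplacian matrix `Q = D + A` of a graph. -/
noncomputable def sLap (G : SimpleGraph V) [Fintype V] : Matrix V V ℝ :=
  Matrix.diagonal (fun v => (G.degree v : ℝ)) + G.adjMatrix ℝ

theorem sLap_isHermitian (G : SimpleGraph V) [Fintype V] : (sLap G).IsHermitian := by
  unfold sLap
  rw [Matrix.IsHermitian, Matrix.conjTranspose_eq_transpose_of_trivial, Matrix.transpose_add,
    Matrix.diagonal_transpose, SimpleGraph.transpose_adjMatrix]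

/-- The Laplacian matrix `L = D - A` of a graph. -/
noncomputable def lap (G : SimpleGraph V) [Fintype V] : Matrix V V ℝ :=
  Matrix.diagonal (fun v => (G.degree v : ℝ)) - G.adjMatrix ℝ

theorem lap_isHermitian (G : SimpleGraph V) [Fintype V] : (lap G).IsHermitian := by
  unfold lap
  rw [Matrix.IsHermitian, Matrix.conjTranspose_eq_transpose_of_trivial, Matrix.transpose_sub,
    Matrix.diagonal_transpose, SimpleGraph.transpose_adjMatrix]

/-- The signless Laplacian Estrada index: the sum of `exp qᵢ` over the eigenvalues of `Q`. -/
noncomputable def SLEE (G : SimpleGraph V) [Fintype V] : ℝ :=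
  ∑ i, Real.exp ((sLap_isHermitian G).eigenvalues i)

/-- The Laplacian Estrada index: the sum of `exp μᵢ` over the eigenvalues of `L`. -/
noncomputable def LEE (G : SimpleGraph V) [Fintype V] : ℝ :=
  ∑ i, Real.exp ((lap_isHermitian G).eigenvalues i)

/-- Semi-edge walks of length `k` from `x` to `y`: a sequence of `k+1` vertices and `k`
edges of `G` such that consecutive vertices are (not necessarily distinct) endpoints of
the intervening edge. -/
def semiEdgeWalks (G : SimpleGraph V) (k : ℕ) (x y : V) :
    Set ((Fin (k + 1) → V) × (Fin k → Sym2 V)) :=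
  {w | w.1 0 = x ∧ w.1 (Fin.last k) = y ∧
    ∀ i : Fin k, w.2 i ∈ G.edgeSet ∧ w.1 i.castSucc ∈ w.2 i ∧ w.1 i.succ ∈ w.2 i}

/-- Closed semi-edge walks of length `k` in `G`. -/
def closedSemiEdgeWalks (G : SimpleGraph V) (k : ℕ) :
    Set ((Fin (k + 1) → V) × (Fin k → Sym2 V)) :=
  {w | w.1 0 = w.1 (Fin.last k) ∧
    ∀ i : Fin k, w.2 i ∈ G.edgeSet ∧ w.1 i.castSucc ∈ w.2 i ∧ w.1 i.succ ∈ w.2 i}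

/-- The number of connected components of a graph. -/
noncomputable def numComponents (G : SimpleGraph V) : ℕ := Nat.card G.ConnectedComponent

/-- A cut vertex: a vertex whose removal increases the number of connected components. -/
def IsCutVertex (G : SimpleGraph V) (v : V) : Prop :=
  numComponents G < numComponents (G.induce ({v}ᶜ : Set V))

/-- The number of cut vertices of a graph. -/
noncomputable def cutVertexCount (G : SimpleGraph V) [Fintype V] : ℕ :=
  (Finset.univ.filter (fun v => IsCutVertex G v)).card

/-- The graph obtained from `G` by adding the edge `uv`. -/
def addEdge (G : SimpleGraph V) (u v : V) : SimpleGraph V :=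
  G ⊔ SimpleGraph.fromEdgeSet {s(u, v)}

/-- A block of `G`: a maximal vertex set inducing a connected subgraph with no cut vertex. -/
def IsBlock (G : SimpleGraph V) (B : Set V) : Prop :=
  (G.induce B).Connected ∧ (∀ v : B, ¬ IsCutVertex (G.induce B) v) ∧
  ∀ C : Set V, B ⊆ C → (G.induce C).Connected → (∀ v : C, ¬ IsCutVertex (G.induce C) v) →
    B = C

open Matrix in
theorem conj_pow_eq {n : Type*} [Fintype n] [DecidableEq n] (U D : Matrix n n ℝ)
    (hU : star U * U = 1) (k : ℕ) : (U * D * star U) ^ k = U * D ^ k * star U := by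
  induction k with
  | zero =>
    have : U * star U = 1 := mul_eq_one_comm.mp hU
    simpa using this.symm
  | succ k ih =>
    rw [pow_succ, ih, pow_succ]
    calc U * D ^ k * star U * (U * D * star U)
        = U * D ^ k * (star U * U) * D * star U := by
          simp only [Matrix.mul_assoc]
      _ = U * (D ^ k * D) * star U := by rw [hU]; simp only [Matrix.mul_assoc, Matrix.mul_one]
      _ = _ := by simp only [Matrix.mul_assoc]

open Matrix in
theorem trace_pow_eq_sum {n : Type*} [Fintype n] [DecidableEq n] (A : Matrix n n ℝ)
    (hA : A.IsHermitian) (k : ℕ) : (A ^ k).trace = ∑ i, (hA.eigenvalues i) ^ k := by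
  have hU : (star (hA.eigenvectorUnitary : Matrix n n ℝ)) * (hA.eigenvectorUnitary : Matrix n n ℝ) = 1 :=
    (Matrix.mem_unitaryGroup_iff').mp (hA.eigenvectorUnitary).2
  have h1 : A ^ k = ((hA.eigenvectorUnitary : Matrix n n ℝ) *
      (diagonal (RCLike.ofReal ∘ hA.eigenvalues)) * (star (hA.eigenvectorUnitary : Matrix n n ℝ))) ^ k := by
    congr 1
    exact hA.spectral_theorem
  rw [h1, conj_pow_eq _ _ hU, Matrix.trace_mul_cycle, hU, Matrix.one_mul,
    diagonal_pow, trace_diagonal]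
  simp

theorem real_exp_eq_tsum (x : ℝ) : Real.exp x = ∑' n : ℕ, x ^ n / n.factorial := by
  rw [Real.exp_eq_exp_ℝ, NormedSpace.exp_eq_tsum_div]

theorem sum_exp_eq_tsum {n : Type*} [Fintype n] (f : n → ℝ) :
    ∑ i, Real.exp (f i) = ∑' k : ℕ, (∑ i, (f i) ^ k) / k.factorial := by
  simp only [real_exp_eq_tsum]
  rw [← Summable.tsum_finsetSum (fun i _ => Real.summable_pow_div_factorial (f i))]
  congr 1
  ext k
  rw [Finset.sum_div]

theorem SLEE_eq_tsum (G : SimpleGraph V) [Fintype V] :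
    SLEE G = ∑' k : ℕ, (sLap G ^ k).trace / k.factorial := by
  rw [SLEE, sum_exp_eq_tsum]
  exact tsum_congr fun k => by rw [trace_pow_eq_sum _ (sLap_isHermitian G)]

theorem summable_trace_pow (G : SimpleGraph V) [Fintype V] :
    Summable (fun k : ℕ => (sLap G ^ k).trace / k.factorial) := by
  have : (fun k : ℕ => (sLap G ^ k).trace / k.factorial)
      = fun k : ℕ => ∑ i, ((sLap_isHermitian G).eigenvalues i) ^ k / k.factorial := by
    funext k
    rw [trace_pow_eq_sum _ (sLap_isHermitian G), Finset.sum_div]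
  rw [this]
  exact summable_sum fun i _ => Real.summable_pow_div_factorial _

theorem entry_pow_nonneg {n : Type*} [Fintype n] (A : Matrix n n ℝ)
    (hA : ∀ i j, 0 ≤ A i j) (k : ℕ) : ∀ i j, 0 ≤ (A ^ k) i j := by
  induction k with
  | zero => intro i j; by_cases h : i = j <;> simp [pow_zero, Matrix.one_apply, h]
  | succ k ih =>
    intro i j
    rw [pow_succ, Matrix.mul_apply]
    exact Finset.sum_nonneg fun l _ => mul_nonneg (ih i l) (hA l j)

theorem entry_pow_mono {n : Type*} [Fintype n] (A B : Matrix n n ℝ)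
    (hA : ∀ i j, 0 ≤ A i j) (hAB : ∀ i j, A i j ≤ B i j) (k : ℕ) :
    ∀ i j, (A ^ k) i j ≤ (B ^ k) i j := by
  induction k with
  | zero => intro i j; simp
  | succ k ih =>
    intro i j
    rw [pow_succ, pow_succ, Matrix.mul_apply, Matrix.mul_apply]
    refine Finset.sum_le_sum fun l _ => ?_
    exact mul_le_mul (ih i l) (hAB l j) (hA l j) (le_trans (entry_pow_nonneg A hA k i l) (ih i l))

theorem sLap_entry_nonneg (G : SimpleGraph V) [Fintype V] (i j : V) : 0 ≤ sLap G i j := by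
  unfold sLap
  rw [Matrix.add_apply, Matrix.diagonal_apply]
  by_cases h : i = j <;> simp [h] <;> positivity

theorem sLap_entry_mono {G H : SimpleGraph V} [Fintype V] (hle : G ≤ H) (i j : V) :
    sLap G i j ≤ sLap H i j := by
  have hdeg : ∀ v, G.degree v ≤ H.degree v := fun v => by
    apply Finset.card_le_card
    intro u hu
    rw [SimpleGraph.mem_neighborFinset] at *
    exact hle hu
  unfold sLap
  rw [Matrix.add_apply, Matrix.add_apply, Matrix.diagonal_apply, Matrix.diagonal_apply]
  by_cases h : i = j
  · simp only [if_pos h]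
    gcongr
    · exact_mod_cast hdeg i
    · simp only [SimpleGraph.adjMatrix_apply]
      by_cases hadj : G.Adj i j
      · simp [hadj, hle hadj]
      · simp [hadj]; positivity
  · simp only [if_neg h, SimpleGraph.adjMatrix_apply, zero_add]
    by_cases hadj : G.Adj i j
    · simp [hadj, hle hadj]
    · simp [hadj]; positivity

theorem trace_sq_eq {n : Type*} [Fintype n] (M : Matrix n n ℝ) :
    (M ^ 2).trace = ∑ i, ∑ j, M i j * M j i := by
  simp [pow_two, Matrix.trace, Matrix.mul_apply, Matrix.diag]

theorem SLEE_lt_of_addEdge [Fintype V] {G H : SimpleGraph V} (hle : G ≤ H) {x y : V}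
    (hxy : H.Adj x y) (hnxy : ¬ G.Adj x y) : SLEE G < SLEE H := by
  rw [SLEE_eq_tsum, SLEE_eq_tsum]
  have hGnn := sLap_entry_nonneg G
  have hHnn := sLap_entry_nonneg H
  have hmono := sLap_entry_mono (V := V) hle
  refine Summable.tsum_lt_tsum_of_nonneg (i := 2) ?_ ?_ ?_ (summable_trace_pow H)
  · intro k
    apply div_nonneg _ (by positivity)
    rw [Matrix.trace]
    exact Finset.sum_nonneg fun i _ => entry_pow_nonneg _ hGnn k i i
  · intro k
    gcongr
    rw [Matrix.trace, Matrix.trace]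
    exact Finset.sum_le_sum fun i _ => entry_pow_mono _ _ hGnn hmono k i i
  · have hxny : x ≠ y := hxy.ne
    have hGxy : sLap G x y = 0 := by
      unfold sLap
      rw [Matrix.add_apply, Matrix.diagonal_apply, if_neg hxny]
      simp [hnxy]
    have hGyx : sLap G y x = 0 := by
      unfold sLap
      rw [Matrix.add_apply, Matrix.diagonal_apply, if_neg hxny.symm]
      have : ¬ G.Adj y x := fun h => hnxy h.symm
      simp [this]
    have hHxy : sLap H x y = 1 := by
      unfold sLap
      rw [Matrix.add_apply, Matrix.diagonal_apply, if_neg hxny]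
      simp [hxy]
    have hHyx : sLap H y x = 1 := by
      unfold sLap
      rw [Matrix.add_apply, Matrix.diagonal_apply, if_neg hxny.symm]
      simp [hxy.symm]
    have hfac : (0:ℝ) < ((2:ℕ).factorial : ℝ) := by positivity
    rw [div_lt_div_iff_of_pos_right hfac, trace_sq_eq, trace_sq_eq]
    refine Finset.sum_lt_sum (fun i _ => Finset.sum_le_sum fun j _ => ?_) ⟨x, Finset.mem_univ x, ?_⟩
    · exact mul_le_mul (hmono i j) (hmono j i) (hGnn j i) (le_trans (hGnn i j) (hmono i j))
    · refine Finset.sum_lt_sum (fun j _ => mul_le_mul (hmono x j) (hmono j x) (hGnn j x)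
        (le_trans (hGnn x j) (hmono x j))) ⟨y, Finset.mem_univ y, ?_⟩
      rw [hGxy, hGyx, hHxy, hHyx]
      norm_num

theorem addEdge_adj (G : SimpleGraph V) (x y a b : V) :
    (addEdge G x y).Adj a b ↔ G.Adj a b ∨ (a ≠ b ∧ (a = x ∧ b = y ∨ a = y ∧ b = x)) := by
  simp only [addEdge, SimpleGraph.sup_adj, SimpleGraph.fromEdgeSet_adj, Set.mem_singleton_iff,
    Sym2.eq_iff]
  tauto

theorem reachable_of_addEdge {G : SimpleGraph V} {x y : V} (hxy : G.Reachable x y) {a b : V} :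
    (addEdge G x y).Reachable a b → G.Reachable a b := by
  have step : ∀ {c d : V}, (addEdge G x y).Adj c d → G.Reachable c d := by
    intro c d h
    rw [addEdge_adj] at h
    rcases h with h | ⟨-, ⟨rfl, rfl⟩ | ⟨rfl, rfl⟩⟩
    · exact h.reachable
    · exact hxy
    · exact hxy.symm
  rintro ⟨w⟩
  induction w with
  | nil => exact SimpleGraph.Reachable.refl _
  | cons h p ih => exact (step h).trans ih

theorem reachable_addEdge_iff {G : SimpleGraph V} {x y : V} (hxy : G.Reachable x y) (a b : V) :
    (addEdge G x y).Reachable a b ↔ G.Reachable a b :=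
  ⟨reachable_of_addEdge hxy, fun h => h.mono le_sup_left⟩

theorem numComponents_congr {G₁ G₂ : SimpleGraph V}
    (h : ∀ a b, G₁.Reachable a b ↔ G₂.Reachable a b) :
    numComponents G₁ = numComponents G₂ :=
  Nat.card_congr (Quot.congr (Equiv.refl V) h)

theorem numComponents_addEdge {G : SimpleGraph V} {x y : V} (hxy : G.Reachable x y) :
    numComponents (addEdge G x y) = numComponents G :=
  numComponents_congr (reachable_addEdge_iff hxy)

theorem numComponents_eq_one_of_connected {W : Type*} (G : SimpleGraph W)
    (h : G.Connected) : numComponents G = 1 := by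
  have hs : Subsingleton G.ConnectedComponent :=
    ⟨SimpleGraph.ConnectedComponent.ind₂ fun a b =>
      SimpleGraph.ConnectedComponent.sound (h.preconnected a b)⟩
  have hn : Nonempty G.ConnectedComponent := h.nonempty.map G.connectedComponentMk
  exact Nat.card_eq_one_iff_unique.mpr ⟨hs, hn⟩

theorem reachable_of_numComponents_eq_one {W : Type*} {G : SimpleGraph W}
    (h : numComponents G = 1) (a b : W) : G.Reachable a b := by
  have hs : Subsingleton G.ConnectedComponent := (Nat.card_eq_one_iff_unique.mp h).1
  exact SimpleGraph.ConnectedComponent.exact (Subsingleton.elim _ _)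

theorem induce_compl_addEdge_mem {G : SimpleGraph V} {x y v : V} (h : x = v ∨ y = v) :
    (addEdge G x y).induce ({v}ᶜ : Set V) = G.induce ({v}ᶜ : Set V) := by
  ext a b
  simp only [SimpleGraph.comap_adj, Function.Embedding.coe_subtype, addEdge_adj]
  constructor
  · rintro (hadj | ⟨-, ⟨hax, hby⟩ | ⟨hay, hbx⟩⟩)
    · exact hadj
    · exfalso
      rcases h with rfl | rfl
      · exact a.2 (by simp [← hax])
      · exact b.2 (by simp [← hby])
    · exfalso
      rcases h with rfl | rfl
      · exact b.2 (by simp [← hbx])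
      · exact a.2 (by simp [← hay])
  · intro hadj
    exact Or.inl hadj

theorem induce_compl_addEdge {G : SimpleGraph V} {x y v : V} (hx : x ≠ v) (hy : y ≠ v) :
    (addEdge G x y).induce ({v}ᶜ : Set V) =
      addEdge (G.induce ({v}ᶜ : Set V)) ⟨x, hx⟩ ⟨y, hy⟩ := by
  ext a b
  simp only [SimpleGraph.comap_adj, Function.Embedding.coe_subtype, addEdge_adj, ne_eq,
    Subtype.ext_iff]

theorem block_reach [Fintype V] {G : SimpleGraph V} {B : Set V} (hB : IsBlock G B)
    {x y v : V} (hx : x ∈ B) (hy : y ∈ B) (hxv : x ≠ v) (hyv : y ≠ v) :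
    (G.induce ({v}ᶜ : Set V)).Reachable ⟨x, hxv⟩ ⟨y, hyv⟩ := by
  by_cases hvB : v ∈ B
  · set v' : B := ⟨v, hvB⟩ with hv'
    have hnc := hB.2.1 v'
    unfold IsCutVertex at hnc
    push_neg at hnc
    have h1 : numComponents (G.induce B) = 1 := numComponents_eq_one_of_connected _ hB.1
    have hx' : (⟨x, hx⟩ : B) ∈ ({v'}ᶜ : Set B) := fun h => hxv (congrArg Subtype.val h)
    have hy' : (⟨y, hy⟩ : B) ∈ ({v'}ᶜ : Set B) := fun h => hyv (congrArg Subtype.val h)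
    haveI : Nonempty (({v'}ᶜ : Set B)) := ⟨⟨⟨x, hx⟩, hx'⟩⟩
    haveI : Nonempty ((G.induce B).induce ({v'}ᶜ : Set B)).ConnectedComponent :=
      ⟨SimpleGraph.connectedComponentMk _ ⟨⟨x, hx⟩, hx'⟩⟩
    haveI : Finite ((G.induce B).induce ({v'}ᶜ : Set B)).ConnectedComponent := Quot.finite _
    have h2 : numComponents ((G.induce B).induce ({v'}ᶜ : Set B)) = 1 := by
      refine le_antisymm (h1 ▸ hnc) Nat.card_pos
    have hr := reachable_of_numComponents_eq_one h2 ⟨⟨x, hx⟩, hx'⟩ ⟨⟨y, hy⟩, hy'⟩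
    let f : ((G.induce B).induce ({v'}ᶜ : Set B)) →g (G.induce ({v}ᶜ : Set V)) :=
      { toFun := fun w => ⟨w.1.1, fun h => w.2 (Subtype.ext h)⟩
        map_rel' := by
          intro a b hab
          simpa using hab }
    exact hr.map f
  · have hBsub : B ⊆ ({v}ᶜ : Set V) := fun b hb hbv => hvB ((Set.mem_singleton_iff.mp hbv) ▸ hb)
    let f : (G.induce B) →g (G.induce ({v}ᶜ : Set V)) :=
      SimpleGraph.induceHom SimpleGraph.Hom.id hBsub
    exact (hB.1.preconnected ⟨x, hx⟩ ⟨y, hy⟩).map f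

theorem isCutVertex_addEdge_iff [Fintype V] {G : SimpleGraph V} (hconn : G.Connected)
    {B : Set V} (hB : IsBlock G B) {x y : V} (hx : x ∈ B) (hy : y ∈ B) (v : V) :
    IsCutVertex (addEdge G x y) v ↔ IsCutVertex G v := by
  have hxy : G.Reachable x y := hconn.preconnected x y
  have h1 : numComponents (addEdge G x y) = numComponents G := numComponents_addEdge hxy
  have h2 : numComponents ((addEdge G x y).induce ({v}ᶜ : Set V))
      = numComponents (G.induce ({v}ᶜ : Set V)) := by
    by_cases hv : x = v ∨ y = v
    · rw [induce_compl_addEdge_mem hv]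
    · push_neg at hv
      rw [induce_compl_addEdge hv.1 hv.2]
      exact numComponents_addEdge (block_reach hB hx hy hv.1 hv.2)
  unfold IsCutVertex
  rw [h1, h2]

theorem cutVertexCount_addEdge [Fintype V] {G : SimpleGraph V} (hconn : G.Connected)
    {B : Set V} (hB : IsBlock G B) {x y : V} (hx : x ∈ B) (hy : y ∈ B) :
    cutVertexCount (addEdge G x y) = cutVertexCount G := by
  unfold cutVertexCount
  congr 1
  apply Finset.filter_congr
  intro v _
  simp only [isCutVertex_addEdge_iff hconn hB hx hy v]

/-- in a graph maximizing SLEE among connected graphs on `n` vertices with `r`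
cut vertices, every block is complete. -/
theorem blocks_complete_of_max_SLEE [Fintype V] {r : ℕ}
    (G : SimpleGraph V) (hconn : G.Connected) (hG : cutVertexCount G = r)
    (hmax : ∀ H : SimpleGraph V, H.Connected → cutVertexCount H = r → SLEE H ≤ SLEE G) :
    ∀ B : Set V, IsBlock G B → ∀ x ∈ B, ∀ y ∈ B, x ≠ y → G.Adj x y := by
  intro B hB x hx y hy hne
  by_contra hadj
  have hle : G ≤ addEdge G x y := le_sup_left
  have hHadj : (addEdge G x y).Adj x y := by
    rw [addEdge_adj]
    exact Or.inr ⟨hne, Or.inl ⟨rfl, rfl⟩⟩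
  have hconn' : (addEdge G x y).Connected := SimpleGraph.Connected.mono hle hconn
  have hcut : cutVertexCount (addEdge G x y) = r := by
    rw [cutVertexCount_addEdge hconn hB hx hy, hG]
  exact absurd (hmax _ hconn' hcut) (not_le.mpr (SLEE_lt_of_addEdge hle hHadj hadj))
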